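/- Let A be a Noether R-algebra. The assignment P ↦ S_A(P) is a bijection from the set Max A of maximal two-sided ideals of A onto the set of isomorphism classes of simple right A-modules, and its inverse sends a simple right A-module S to its annihilator Ann_A(S). -/

import Mathlib

/-!
Common definitions: module-theoretic notions over a (possibly noncommutative) ring,
notions relative to a central base ring, and Hom-module structures.
Right `A`-modules are treated as left `Aᵐᵒᵖ`-modules.
-/

universe u

open MulOpposite

section AnyRing

variable {S : Type u} [Ring S]

/-- Flatness of a left `S`-module, via the standard equational criterion. -/
def ModFlat (S : Type u) [Ring S] (M : Type u) [AddCommGroup M] [Module S M] : Prop :=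
  ∀ (n : ℕ) (a : Fin n → S) (x : Fin n → M), ∑ i, a i • x i = 0 →
    ∃ (m : ℕ) (b : Fin n → Fin m → S) (y : Fin m → M),
      (∀ i, x i = ∑ j, b i j • y j) ∧ ∀ j, ∑ i, a i * b i j = 0

/-- `M` is cotorsion: every extension of a flat module by `M` splits
(equivalently, `Ext¹(F, M) = 0` for all flat `F`). -/
def ModCotorsion (S : Type u) [Ring S] (M : Type u) [AddCommGroup M] [Module S M] : Prop :=
  ∀ (X : Type u) [AddCommGroup X] [Module S X], ∀ i : M →ₗ[S] X,
    Function.Injective i → ModFlat S (X ⧸ LinearMap.range i) →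
      ∃ r : X →ₗ[S] M, r ∘ₗ i = LinearMap.id

/-- `M` is flat cotorsion. -/
def ModFlatCotorsion (S : Type u) [Ring S] (M : Type u) [AddCommGroup M] [Module S M] : Prop :=
  ModFlat S M ∧ ModCotorsion S M

/-- `f : F → M` is a flat cover: `F` is flat, every map from a flat module to `M`
factors through `f`, and `f` is right minimal. -/
def IsFlatCover {F M : Type u} [AddCommGroup F] [Module S F] [AddCommGroup M] [Module S M]
    (f : F →ₗ[S] M) : Prop :=
  ModFlat S F ∧
    (∀ (G : Type u) [AddCommGroup G] [Module S G], ModFlat S G →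
      ∀ g : G →ₗ[S] M, ∃ h : G →ₗ[S] F, f ∘ₗ h = g) ∧
    ∀ g : F →ₗ[S] F, f ∘ₗ g = f → Function.Bijective g

/-- `f : M → I` is an injective envelope: an essential monomorphism into an
injective module. -/
def IsInjEnvelope {M I : Type u} [AddCommGroup M] [Module S M] [AddCommGroup I] [Module S I]
    (f : M →ₗ[S] I) : Prop :=
  Function.Injective f ∧ Module.Injective S I ∧
    ∀ K : Submodule S I, K ⊓ LinearMap.range f = ⊥ → K = ⊥

/-- `f` is a pure monomorphism: injective, and every finite system of linear
equations with constants in `M` solvable in `N` is solvable in `M`. -/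
def IsPureMono {M N : Type u} [AddCommGroup M] [Module S M] [AddCommGroup N] [Module S N]
    (f : M →ₗ[S] N) : Prop :=
  Function.Injective f ∧
    ∀ (k n : ℕ) (a : Fin k → Fin n → S) (c : Fin n → M),
      (∃ x : Fin k → N, ∀ j, f (c j) = ∑ i, a i j • x i) →
        ∃ y : Fin k → M, ∀ j, c j = ∑ i, a i j • y i

/-- `M` is pure-injective. -/
def ModPureInjective (S : Type u) [Ring S] (M : Type u) [AddCommGroup M] [Module S M] : Prop :=
  ∀ (X Y : Type u) [AddCommGroup X] [Module S X] [AddCommGroup Y] [Module S Y],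
    ∀ f : X →ₗ[S] Y, IsPureMono f → ∀ g : X →ₗ[S] M, ∃ h : Y →ₗ[S] M, h ∘ₗ f = g

/-- `f : M → H` is a pure-injective envelope: a left minimal pure monomorphism into a
pure-injective module. -/
def IsPureInjEnvelope {M H : Type u} [AddCommGroup M] [Module S M] [AddCommGroup H] [Module S H]
    (f : M →ₗ[S] H) : Prop :=
  IsPureMono f ∧ ModPureInjective S H ∧ ∀ g : H →ₗ[S] H, g ∘ₗ f = f → Function.Bijective g

/-- `f : M → C` is a cotorsion envelope: a left minimal monomorphism into a cotorsion
module through which every map from `M` to a cotorsion module factors. -/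
def IsCotorsionEnvelope {M C : Type u} [AddCommGroup M] [Module S M] [AddCommGroup C] [Module S C]
    (f : M →ₗ[S] C) : Prop :=
  Function.Injective f ∧ ModCotorsion S C ∧
    (∀ (C' : Type u) [AddCommGroup C'] [Module S C'], ModCotorsion S C' →
      ∀ g : M →ₗ[S] C', ∃ h : C →ₗ[S] C', h ∘ₗ f = g) ∧
    ∀ g : C →ₗ[S] C, g ∘ₗ f = f → Function.Bijective g

/-- An indecomposable module: nontrivial, and with no nontrivial direct sum
decomposition. -/
def ModIndecomposable (S : Type u) [Ring S] (M : Type u) [AddCommGroup M] [Module S M] : Prop :=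
  Nontrivial M ∧ ∀ N N' : Submodule S M, IsCompl N N' → N = ⊥ ∨ N' = ⊥

/-- A prime two-sided ideal of a possibly noncommutative ring, encoded as a left ideal
that is closed under right multiplication and satisfies `aSb ⊆ P → a ∈ P ∨ b ∈ P`. -/
def IsPrimeTwoSided (P : Ideal S) : Prop :=
  P ≠ ⊤ ∧ (∀ a ∈ P, ∀ b : S, a * b ∈ P) ∧
    ∀ a b : S, (∀ x : S, a * x * b ∈ P) → a ∈ P ∨ b ∈ P

/-- A maximal two-sided ideal: a proper two-sided ideal that is maximal among proper
two-sided ideals. -/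
def IsMaximalTwoSided (P : Ideal S) : Prop :=
  (∀ a ∈ P, ∀ b : S, a * b ∈ P) ∧ P ≠ ⊤ ∧
    ∀ Q : Ideal S, (∀ a ∈ Q, ∀ b : S, a * b ∈ Q) → P < Q → Q = ⊤

/-- The submodule `M·J` of a right `S`-module generated by the products `x • a`, `a ∈ J`. -/
def setSMulSub (J : Set S) (M : Type u) [AddCommGroup M] [Module Sᵐᵒᵖ M] : Submodule Sᵐᵒᵖ M :=
  Submodule.span Sᵐᵒᵖ {y | ∃ (x : M) (a : S), a ∈ J ∧ y = op a • x}

/-- The submodule of a right `S`-module annihilated by a set `J` closed under left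
multiplication (e.g. a left or two-sided ideal); this realizes `Hom_S(S/J, M)`. -/
def setAnnSub (J : Set S) (hJ : ∀ c : S, ∀ a ∈ J, c * a ∈ J)
    (M : Type u) [AddCommGroup M] [Module Sᵐᵒᵖ M] : Submodule Sᵐᵒᵖ M where
  carrier := {x | ∀ a ∈ J, op a • x = 0}
  add_mem' := fun {x y} hx hy a ha => by rw [smul_add, hx a ha, hy a ha, add_zero]
  zero_mem' := fun a _ => smul_zero _
  smul_mem' := fun c x hx a ha => by
    have h1 : (op a : Sᵐᵒᵖ) • c • x = op (c.unop * a) • x := by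
      rw [smul_smul]; rfl
    rw [h1, hx _ (hJ c.unop a ha)]

/-- The Jacobson radical of a ring, as a set: the intersection of all maximal left
ideals (which coincides with the two-sided Jacobson radical). -/
def jacobsonSet (T : Type u) [Ring T] : Set T :=
  {a : T | ∀ J : Ideal T, J.IsMaximal → a ∈ J}

/-- The contraction `ρ⁻¹(rad T)` of the Jacobson radical along a ring homomorphism. -/
def radContraction {S T : Type u} [Ring S] [Ring T] (ρ : S →+* T) : Set S :=
  ρ ⁻¹' jacobsonSet T

theorem radContraction_mul_mem {S T : Type u} [Ring S] [Ring T] (ρ : S →+* T)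
    (c : S) (a : S) (ha : a ∈ radContraction ρ) : c * a ∈ radContraction ρ := by
  intro J hJ
  rw [map_mul]
  exact J.mul_mem_left _ (ha J hJ)

end AnyRing

section Base

variable {R : Type u} [CommRing R]

/-- `M` is `p`-local: every `s ∉ p` acts bijectively on `M`
(equivalently, `M → M_p` is an isomorphism). -/
def PLocal (p : Ideal R) (M : Type u) [AddCommGroup M] [Module R M] : Prop :=
  ∀ s ∉ p, Function.Bijective fun x : M => s • x

/-- `M` is `a`-torsion. -/
def PTorsion (a : Ideal R) (M : Type u) [AddCommGroup M] [Module R M] : Prop :=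
  ∀ x : M, ∃ n : ℕ, ∀ r ∈ a ^ n, r • x = 0

/-- `f : M → N` exhibits `N` as the localization of `M` at the prime `p`. -/
def IsLocalizationHom (p : Ideal R) {M N : Type u} [AddCommGroup M] [Module R M]
    [AddCommGroup N] [Module R N] (f : M →ₗ[R] N) : Prop :=
  (∀ s ∉ p, Function.Bijective fun y : N => s • y) ∧
    (∀ y : N, ∃ (x : M) (s : R), s ∉ p ∧ s • y = f x) ∧
    ∀ x : M, f x = 0 → ∃ s ∉ p, s • x = 0

/-- The map induced by `f` on quotients modulo `a ^ n`. -/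
noncomputable def quotPowMap (a : Ideal R) (n : ℕ) {M N : Type u} [AddCommGroup M] [Module R M]
    [AddCommGroup N] [Module R N] (f : M →ₗ[R] N) :
    (M ⧸ (a ^ n • ⊤ : Submodule R M)) →ₗ[R] N ⧸ (a ^ n • ⊤ : Submodule R N) :=
  Submodule.mapQ _ _ f <| by
    rw [← Submodule.map_le_iff_le_comap, Submodule.map_smul'']
    exact Submodule.smul_mono le_rfl le_top

/-- `f : M → N` exhibits `N` as the `a`-adic completion of `M`:
`N` is `a`-adically complete and `f` induces isomorphisms modulo all powers of `a`. -/
def IsAdicCompletionHom (a : Ideal R) {M N : Type u} [AddCommGroup M] [Module R M]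
    [AddCommGroup N] [Module R N] (f : M →ₗ[R] N) : Prop :=
  IsAdicComplete a N ∧ ∀ n : ℕ, Function.Bijective (quotPowMap a n f)

/-- A simple `p`-localized module: a right module over `T` (with central `R`-action) that
is `p`-local, annihilated by `P`, and simple over the localization `T_p` (expressed via
submodules closed under division by elements outside `p`). -/
def LocSimple {T : Type u} [Ring T] [Algebra R T] (p : Ideal R) (P : Set T)
    (S : Type u) [AddCommGroup S] [Module R S] [Module T S] [IsScalarTower R T S] : Prop :=
  Nontrivial S ∧ PLocal p S ∧ (∀ a ∈ P, ∀ x : S, a • x = 0) ∧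
    ∀ N : Submodule T S, (∀ s ∉ p, ∀ x : S, s • x ∈ N → x ∈ N) → N = ⊥ ∨ N = ⊤

/-- `M` is, in a `p`-local sense, a semisimple module over the localization at `p`:
it is `p`-local and the lattice of localized submodules is complemented. -/
def SemisimpleLoc {T : Type u} [Ring T] [Algebra R T] (p : Ideal R)
    (M : Type u) [AddCommGroup M] [Module R M] [Module T M] [IsScalarTower R T M] : Prop :=
  PLocal p M ∧
    ∀ N : Submodule T M, (∀ s ∉ p, ∀ x : M, s • x ∈ N → x ∈ N) →
      ∃ N' : Submodule T M, (∀ s ∉ p, ∀ x : M, s • x ∈ N' → x ∈ N') ∧ IsCompl N N'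

end Base

section SmulTop

variable {R A : Type u} [CommRing R] [Ring A] [Algebra R A]

/-- The image `a • M` of an ideal of `R` in a right `A`-module, as an `Aᵐᵒᵖ`-submodule. -/
def idealSMulSub (a : Ideal R) (M : Type u) [AddCommGroup M] [Module R M] [Module Aᵐᵒᵖ M]
    [IsScalarTower R Aᵐᵒᵖ M] : Submodule Aᵐᵒᵖ M where
  carrier := (a • (⊤ : Submodule R M) : Submodule R M)
  add_mem' := fun hx hy => Submodule.add_mem _ hx hy
  zero_mem' := Submodule.zero_mem _
  smul_mem' := fun c x hx => by
    refine Submodule.smul_induction_on hx (fun r hr y _ => ?_) (fun u v hu hv => ?_)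
    · rw [smul_comm]
      exact Submodule.smul_mem_smul hr Submodule.mem_top
    · rw [smul_add]
      exact Submodule.add_mem _ hu hv

end SmulTop

section HomModules

variable {S₀ T : Type u} [CommRing S₀] [Ring T]
variable {M E : Type u} [AddCommGroup M] [Module S₀ M] [AddCommGroup E] [Module S₀ E]

/-- If `M` is a left `T`-module then `Hom_{S₀}(M, E)` is a right `T`-module. -/
instance homRightSMul [Module T M] [SMulCommClass T S₀ M] : SMul Tᵐᵒᵖ (M →ₗ[S₀] E) :=
  ⟨fun a f => f ∘ₗ DistribMulAction.toLinearMap S₀ M a.unop⟩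

theorem homRight_smul_apply [Module T M] [SMulCommClass T S₀ M] (a : Tᵐᵒᵖ)
    (f : M →ₗ[S₀] E) (x : M) : (a • f) x = f (a.unop • x) := rfl

instance homRightModule [Module T M] [SMulCommClass T S₀ M] : Module Tᵐᵒᵖ (M →ₗ[S₀] E) where
  one_smul f := LinearMap.ext fun x => by rw [homRight_smul_apply, unop_one, one_smul]
  mul_smul a b f := LinearMap.ext fun x => by
    rw [homRight_smul_apply, homRight_smul_apply, homRight_smul_apply, unop_mul, mul_smul]
  smul_zero a := LinearMap.ext fun x => rfl
  smul_add a f g := LinearMap.ext fun x => rfl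
  add_smul a b f := LinearMap.ext fun x => by
    rw [homRight_smul_apply, unop_add, add_smul, map_add]; rfl
  zero_smul f := LinearMap.ext fun x => by
    rw [homRight_smul_apply, unop_zero, zero_smul, map_zero]; rfl

instance homRightTower [Module T M] [SMulCommClass T S₀ M] [Algebra S₀ T]
    [IsScalarTower S₀ T M] : IsScalarTower S₀ Tᵐᵒᵖ (M →ₗ[S₀] E) := by
  constructor
  intro r a f
  refine LinearMap.ext fun x => ?_
  rw [LinearMap.smul_apply, homRight_smul_apply, homRight_smul_apply, unop_smul,
    smul_assoc, map_smul]

/-- If `M` is a right `T`-module then `Hom_{S₀}(M, E)` is a left `T`-module. -/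
instance homLeftSMul [Module Tᵐᵒᵖ M] [SMulCommClass Tᵐᵒᵖ S₀ M] : SMul T (M →ₗ[S₀] E) :=
  ⟨fun a f => f ∘ₗ DistribMulAction.toLinearMap S₀ M (op a)⟩

theorem homLeft_smul_apply [Module Tᵐᵒᵖ M] [SMulCommClass Tᵐᵒᵖ S₀ M] (a : T)
    (f : M →ₗ[S₀] E) (x : M) : (a • f) x = f (op a • x) := rfl

instance homLeftModule [Module Tᵐᵒᵖ M] [SMulCommClass Tᵐᵒᵖ S₀ M] : Module T (M →ₗ[S₀] E) where
  one_smul f := LinearMap.ext fun x => by rw [homLeft_smul_apply, op_one, one_smul]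
  mul_smul a b f := LinearMap.ext fun x => by
    rw [homLeft_smul_apply, homLeft_smul_apply, homLeft_smul_apply, op_mul, mul_smul]
  smul_zero a := LinearMap.ext fun x => rfl
  smul_add a f g := LinearMap.ext fun x => rfl
  add_smul a b f := LinearMap.ext fun x => by
    rw [homLeft_smul_apply, op_add, add_smul, map_add]; rfl
  zero_smul f := LinearMap.ext fun x => by
    rw [homLeft_smul_apply, op_zero, zero_smul, map_zero]; rfl

instance homLeftTower [Module Tᵐᵒᵖ M] [SMulCommClass Tᵐᵒᵖ S₀ M] [Algebra S₀ T]
    [IsScalarTower S₀ Tᵐᵒᵖ M] : IsScalarTower S₀ T (M →ₗ[S₀] E) := by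
  constructor
  intro r a f
  refine LinearMap.ext fun x => ?_
  rw [LinearMap.smul_apply, homLeft_smul_apply, homLeft_smul_apply, op_smul,
    smul_assoc, map_smul]

end HomModules

section Bundled

/-- A bundled right `A`-module with compatible central `R`-action. -/
structure RightModule (R A : Type u) [CommRing R] [Ring A] [Algebra R A] :
    Type (u + 1) where
  carrier : Type u
  [addCommGroup : AddCommGroup carrier]
  [modA : Module Aᵐᵒᵖ carrier]
  [modR : Module R carrier]
  [tower : IsScalarTower R Aᵐᵒᵖ carrier]

attribute [instance] RightModule.addCommGroup RightModule.modA RightModule.modR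
  RightModule.tower

instance (R A : Type u) [CommRing R] [Ring A] [Algebra R A] :
    CoeSort (RightModule R A) (Type u) :=
  ⟨RightModule.carrier⟩

/-- A bundled left `A`-module with compatible central `R`-action. -/
structure LeftModule (R A : Type u) [CommRing R] [Ring A] [Algebra R A] :
    Type (u + 1) where
  carrier : Type u
  [addCommGroup : AddCommGroup carrier]
  [modA : Module A carrier]
  [modR : Module R carrier]
  [tower : IsScalarTower R A carrier]

attribute [instance] LeftModule.addCommGroup LeftModule.modA LeftModule.modR
  LeftModule.tower

instance (R A : Type u) [CommRing R] [Ring A] [Algebra R A] :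
    CoeSort (LeftModule R A) (Type u) :=
  ⟨LeftModule.carrier⟩

end Bundled

/-- A bundled module over a ring `S`. -/
structure ModuleOver (S : Type u) [Ring S] : Type (u + 1) where
  carrier : Type u
  [addCommGroup : AddCommGroup carrier]
  [mod : Module S carrier]

attribute [instance] ModuleOver.addCommGroup ModuleOver.mod

section MyProof18

open LinearMap

section Aux18

variable {A : Type u} [Ring A]

/-- Annihilator of a right `A`-module, as a left ideal (it is in fact two-sided). -/
def annIdeal18 (S : Type u) [AddCommGroup S] [Module Aᵐᵒᵖ S] : Ideal A where
  carrier := {a : A | ∀ x : S, op a • x = 0}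
  add_mem' := fun {a b} ha hb x => by rw [op_add, add_smul, ha x, hb x, add_zero]
  zero_mem' := fun x => by rw [op_zero, zero_smul]
  smul_mem' := fun c a ha x => by
    have h : op (c • a) = op a * op c := by rw [smul_eq_mul, op_mul]
    rw [h, mul_smul, ha]

theorem mem_annIdeal18 {S : Type u} [AddCommGroup S] [Module Aᵐᵒᵖ S] {a : A} :
    a ∈ annIdeal18 S ↔ ∀ x : S, op a • x = 0 := Iff.rfl

theorem annIdeal18_mul_mem {S : Type u} [AddCommGroup S] [Module Aᵐᵒᵖ S] {a : A}
    (ha : a ∈ annIdeal18 S) (b : A) : a * b ∈ annIdeal18 S := fun x => by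
  rw [op_mul, mul_smul, ha x, smul_zero]

theorem annIdeal18_ne_top {S : Type u} [AddCommGroup S] [Module Aᵐᵒᵖ S] [Nontrivial S] :
    annIdeal18 (A := A) S ≠ ⊤ := by
  intro h
  obtain ⟨x, hx⟩ := exists_ne (0 : S)
  have h1 : (1 : A) ∈ annIdeal18 S := h ▸ Submodule.mem_top
  have := h1 x
  rw [op_one, one_smul] at this
  exact hx this

theorem isSemisimple_of_isSimple18 {T M : Type u} [Ring T] [AddCommGroup M] [Module T M]
    [IsSimpleModule T M] : IsSemisimpleModule T M :=
  IsSemisimpleModule.of_sSup_simples_eq_top <| top_unique <| le_sSup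
    (show IsSimpleModule T (⊤ : Submodule T M) from IsSimpleModule.congr Submodule.topEquiv)

theorem isSemisimple_pi18 {T M : Type u} [Ring T] [AddCommGroup M] [Module T M]
    [IsSemisimpleModule T M] (n : ℕ) : IsSemisimpleModule T (Fin n → M) :=
  isSemisimpleModule_of_isSemisimpleModule_submodule'
    (p := fun i => LinearMap.range (LinearMap.single T (fun _ => M) i))
    (fun _ => IsSemisimpleModule.range _) (LinearMap.iSup_range_single T _)

/-- Every simple submodule of `M ⧸ ker f`, for `f : M → Sⁿ` with `S` simple,
is isomorphic to `S`. -/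
theorem simple_quot_sub_equiv18 {T M S : Type u} [Ring T] [AddCommGroup M] [Module T M]
    [AddCommGroup S] [Module T S] [IsSimpleModule T S] {n : ℕ} (f : M →ₗ[T] (Fin n → S))
    (U : Submodule T (M ⧸ ker f)) [IsSimpleModule T U] : Nonempty (U ≃ₗ[T] S) := by
  classical
  let θ : Fin n → (U →ₗ[T] S) := fun i =>
    (LinearMap.proj i) ∘ₗ (range f).subtype ∘ₗ (f.quotKerEquivRange : _ →ₗ[T] _) ∘ₗ U.subtype
  have := IsSimpleModule.nontrivial T U
  obtain ⟨u, hu⟩ := exists_ne (0 : U)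
  have hex : ∃ i, θ i u ≠ 0 := by
    by_contra hno
    push_neg at hno
    have hval : ((f.quotKerEquivRange (U.subtype u) : range f) : Fin n → S) = 0 := by
      funext i
      exact hno i
    have hz : f.quotKerEquivRange (U.subtype u) = 0 := Subtype.ext hval
    have : U.subtype u = 0 := by
      have h0 : f.quotKerEquivRange (U.subtype u) = f.quotKerEquivRange 0 := by
        rw [hz, map_zero]
      exact f.quotKerEquivRange.injective h0
    exact hu (U.injective_subtype (by simpa using this))
  obtain ⟨i, hi⟩ := hex
  have hθ : θ i ≠ 0 := fun h => hi (by rw [h]; rfl)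
  exact ⟨LinearEquiv.ofBijective (θ i) (bijective_of_ne_zero hθ)⟩

end Aux18


section Core18

variable {A : Type u} [Ring A]

/-- Right multiplication action on a fixed element, as an `Aᵐᵒᵖ`-linear map on `A`. -/
def cycMap18 {M : Type u} [AddCommGroup M] [Module Aᵐᵒᵖ M] (y : M) : A →ₗ[Aᵐᵒᵖ] M where
  toFun a := op a • y
  map_add' a b := by
    show op (a + b) • y = op a • y + op b • y
    rw [op_add, add_smul]
  map_smul' c a := by
    show op (c • a) • y = c • (op a • y)
    rw [← mul_smul]
    have h : op (c • a) = c * op a := by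
      calc op (c • a) = op (a * c.unop) := rfl
        _ = op c.unop * op a := op_mul _ _
        _ = c * op a := by rw [op_unop]
    rw [h]

theorem cycMap18_surjective {M : Type u} [AddCommGroup M] [Module Aᵐᵒᵖ M]
    [IsSimpleModule Aᵐᵒᵖ M] {y : M} (hy : y ≠ 0) : Function.Surjective (cycMap18 (A := A) y) := by
  rw [← range_eq_top]
  rcases eq_bot_or_eq_top (range (cycMap18 (A := A) y)) with h | h
  · exfalso
    apply hy
    have hmem : y ∈ range (cycMap18 (A := A) y) := ⟨1, by simp [cycMap18]⟩
    simpa [h] using hmem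
  · exact h

theorem quot_endo_eq_mul18 {K : Submodule Aᵐᵒᵖ A} (g : (A ⧸ K) →ₗ[Aᵐᵒᵖ] (A ⧸ K)) :
    ∃ c : A, ∀ a : A, g (K.mkQ a) = K.mkQ (c * a) := by
  obtain ⟨c, hc⟩ := K.mkQ_surjective (g (K.mkQ 1))
  refine ⟨c, fun a => ?_⟩
  have h1 : K.mkQ a = op a • K.mkQ 1 := by
    rw [← map_smul]
    congr 1
    rw [op_smul_eq_mul, one_mul]
  rw [h1, map_smul, ← hc, ← map_smul, op_smul_eq_mul]

set_option linter.unusedSectionVars false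
variable {R : Type u} [CommRing R] [Algebra R A] [Module.Finite R A]

theorem central_smul_comm18 {S : Type u} [AddCommGroup S] [Module Aᵐᵒᵖ S]
    (r : R) (a : A) (x : S) :
    op a • (op (algebraMap R A r) • x) = op (algebraMap R A r) • (op a • x) := by
  rw [← mul_smul, ← mul_smul, ← op_mul, ← op_mul, Algebra.commutes]

theorem exists_rgens18 (S : Type u) [AddCommGroup S] [Module Aᵐᵒᵖ S]
    [IsSimpleModule Aᵐᵒᵖ S] :
    ∃ (n : ℕ) (x : Fin n → S), ∀ s : S, ∃ c : Fin n → R,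
      s = ∑ i, op (algebraMap R A (c i)) • x i := by
  obtain ⟨n, g, hg⟩ := Module.Finite.exists_fin (R := R) (M := A)
  have := IsSimpleModule.nontrivial Aᵐᵒᵖ (M := S)
  obtain ⟨x₀, hx₀⟩ := exists_ne (0 : S)
  refine ⟨n, fun i => op (g i) • x₀, fun s => ?_⟩
  have hspan : (Submodule.span Aᵐᵒᵖ {x₀}) = ⊤ := by
    rcases eq_bot_or_eq_top (Submodule.span Aᵐᵒᵖ {x₀}) with h | h
    · exact absurd (by simpa [h] using Submodule.mem_span_singleton_self (R := Aᵐᵒᵖ) x₀) hx₀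
    · exact h
  have hs : s ∈ Submodule.span Aᵐᵒᵖ {x₀} := hspan ▸ Submodule.mem_top
  obtain ⟨a, ha⟩ := Submodule.mem_span_singleton.mp hs
  obtain ⟨c, hc⟩ := (Submodule.mem_span_range_iff_exists_fun R).mp
    (show a.unop ∈ Submodule.span R (Set.range g) from hg ▸ Submodule.mem_top)
  refine ⟨c, ?_⟩
  calc s = a • x₀ := ha.symm
    _ = op (∑ i, c i • g i) • x₀ := by rw [hc, op_unop]
    _ = ∑ i, op (c i • g i) • x₀ := by
        rw [show op (∑ i, c i • g i) = ∑ i, op (c i • g i) from map_sum (opAddEquiv : A ≃+ Aᵐᵒᵖ) _ _,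
          Finset.sum_smul]
    _ = ∑ i, op (algebraMap R A (c i)) • (op (g i) • x₀) := by
        refine Finset.sum_congr rfl fun i _ => ?_
        rw [Algebra.smul_def, Algebra.commutes, op_mul, mul_smul]

/-- The map `A → Sⁿ` given by a finite family of elements of `S`. -/
def genMap18 {S : Type u} [AddCommGroup S] [Module Aᵐᵒᵖ S] {n : ℕ} (x : Fin n → S) :
    A →ₗ[Aᵐᵒᵖ] (Fin n → S) :=
  LinearMap.pi fun i => cycMap18 (x i)

theorem mem_ker_genMap18 {S : Type u} [AddCommGroup S] [Module Aᵐᵒᵖ S] {n : ℕ}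
    {x : Fin n → S}
    (hx : ∀ s : S, ∃ c : Fin n → R, s = ∑ i, op (algebraMap R A (c i)) • x i) (a : A) :
    a ∈ ker (genMap18 x) ↔ ∀ s : S, op a • s = 0 := by
  constructor
  · intro h s
    obtain ⟨c, rfl⟩ := hx s
    rw [Finset.smul_sum]
    refine Finset.sum_eq_zero fun i _ => ?_
    rw [central_smul_comm18]
    have hi : op a • x i = 0 := congrFun (mem_ker.mp h) i
    rw [hi, smul_zero]
  · intro h
    rw [mem_ker]
    funext i
    exact h (x i)

end Core18



section P18

variable {A : Type u} [Ring A]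

theorem part1_18 (P : Ideal A) (hP : IsMaximalTwoSided P) :
    ∃ S : ModuleOver Aᵐᵒᵖ, IsSimpleModule Aᵐᵒᵖ S.carrier ∧
      {a : A | ∀ x : S.carrier, op a • x = 0} = (P : Set A) := by
  obtain ⟨hPr, hPne, hPmax⟩ := hP
  let P' : Ideal Aᵐᵒᵖ :=
    { carrier := unop ⁻¹' (P : Set A)
      add_mem' := fun {a b} ha hb => by
        show (a + b).unop ∈ P
        rw [unop_add]; exact P.add_mem ha hb
      zero_mem' := by show (0 : Aᵐᵒᵖ).unop ∈ P; rw [unop_zero]; exact P.zero_mem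
      smul_mem' := fun c a ha => by
        show (c • a).unop ∈ P
        rw [smul_eq_mul, unop_mul]
        exact hPr a.unop ha c.unop }
  have hP'ne : P' ≠ ⊤ := by
    intro h
    have h1 : (1 : Aᵐᵒᵖ) ∈ P' := h ▸ Submodule.mem_top
    exact hPne ((Ideal.eq_top_iff_one P).mpr h1)
  obtain ⟨m, hm, hPm⟩ := Ideal.exists_le_maximal P' hP'ne
  haveI : Nontrivial (Aᵐᵒᵖ ⧸ m) :=
    Submodule.Quotient.nontrivial_iff.mpr hm.ne_top
  haveI hsimp : IsSimpleModule Aᵐᵒᵖ (Aᵐᵒᵖ ⧸ m) := isSimpleModule_iff_isCoatom.mpr hm.out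
  have hPle : P ≤ annIdeal18 (A := A) (Aᵐᵒᵖ ⧸ m) := by
    intro a ha
    intro x
    obtain ⟨b, rfl⟩ := Submodule.Quotient.mk_surjective m x
    rw [← Submodule.Quotient.mk_smul, Submodule.Quotient.mk_eq_zero]
    have : (op a • b).unop ∈ P := by
      rw [smul_eq_mul, unop_mul, unop_op]
      exact P.mul_mem_left b.unop ha
    exact hPm this
  have heq : annIdeal18 (A := A) (Aᵐᵒᵖ ⧸ m) = P := by
    by_contra hne2
    have hlt : P < annIdeal18 (A := A) (Aᵐᵒᵖ ⧸ m) := lt_of_le_of_ne hPle (Ne.symm hne2)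
    exact annIdeal18_ne_top (hPmax _ (fun a ha b => annIdeal18_mul_mem ha b) hlt)
  exact ⟨⟨Aᵐᵒᵖ ⧸ m⟩, hsimp, by rw [← heq]; rfl⟩

set_option linter.unusedSectionVars false

theorem part2_18 (R : Type u) [CommRing R] [Algebra R A] [Module.Finite R A] (S : Type u) [AddCommGroup S] [Module Aᵐᵒᵖ S]
    (hS : IsSimpleModule Aᵐᵒᵖ S) : IsMaximalTwoSided (annIdeal18 (A := A) S) := by
  haveI := hS
  haveI := IsSimpleModule.nontrivial Aᵐᵒᵖ (M := S)
  refine ⟨fun a ha b => annIdeal18_mul_mem ha b, annIdeal18_ne_top, ?_⟩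
  intro Q hQ hlt
  obtain ⟨n, x, hx⟩ := exists_rgens18 (A := A) (R := R) S
  set f := genMap18 (A := A) x with hf
  letI : IsSemisimpleModule Aᵐᵒᵖ S := isSemisimple_of_isSimple18
  letI : IsSemisimpleModule Aᵐᵒᵖ (Fin n → S) := isSemisimple_pi18 n
  letI : IsSemisimpleModule Aᵐᵒᵖ ↥(range f) := inferInstance
  letI : IsSemisimpleModule Aᵐᵒᵖ (A ⧸ ker f) := IsSemisimpleModule.congr f.quotKerEquivRange
  let Q' : Submodule Aᵐᵒᵖ A :=
    { carrier := (Q : Set A)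
      add_mem' := fun {a b} ha hb => Q.add_mem ha hb
      zero_mem' := Q.zero_mem
      smul_mem' := fun c a ha => by
        show c • a ∈ Q
        rw [show c • a = a * c.unop from rfl]
        exact hQ a ha c.unop }
  let Qb := Q'.map (ker f).mkQ
  have hkerann : ∀ a : A, a ∈ ker f ↔ a ∈ annIdeal18 (A := A) S := fun a =>
    mem_ker_genMap18 hx a
  have key : ∀ U : Submodule Aᵐᵒᵖ (A ⧸ ker f), IsSimpleModule Aᵐᵒᵖ U → U ≤ Qb := by
    intro U hU
    haveI := hU
    obtain ⟨a, haQ, hanot⟩ := SetLike.exists_of_lt hlt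
    have hQbne : Qb ≠ ⊥ := by
      intro h
      have hmem : (ker f).mkQ a ∈ Qb := Submodule.mem_map_of_mem haQ
      rw [h, Submodule.mem_bot] at hmem
      have : a ∈ ker f := by
        rwa [Submodule.mkQ_apply, Submodule.Quotient.mk_eq_zero] at hmem
      exact hanot ((hkerann a).mp this)
    obtain ⟨T, hTQb, hT⟩ := (IsSemisimpleModule.eq_bot_or_exists_simple_le Qb).resolve_left hQbne
    haveI := hT
    obtain ⟨eU⟩ := simple_quot_sub_equiv18 f U
    obtain ⟨eT⟩ := simple_quot_sub_equiv18 f T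
    let f₀ : T ≃ₗ[Aᵐᵒᵖ] U := eT.trans eU.symm
    obtain ⟨C, hC⟩ := exists_isCompl T
    let pr := Submodule.linearProjOfIsCompl T C hC
    let gmap : (A ⧸ ker f) →ₗ[Aᵐᵒᵖ] (A ⧸ ker f) := U.subtype ∘ₗ (f₀ : T →ₗ[Aᵐᵒᵖ] U) ∘ₗ pr
    obtain ⟨c, hc⟩ := quot_endo_eq_mul18 gmap
    intro u huU
    obtain ⟨t, ht⟩ := f₀.surjective ⟨u, huU⟩
    obtain ⟨q, hqQ, hq⟩ := Submodule.mem_map.mp (hTQb t.2)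
    have h1 : gmap (t : A ⧸ ker f) = u := by
      have hpr : pr (t : A ⧸ ker f) = t := Submodule.linearProjOfIsCompl_apply_left hC t
      show U.subtype (f₀ (pr (t : A ⧸ ker f))) = u
      rw [hpr, ht]
      rfl
    have h2 : gmap ((ker f).mkQ q) = (ker f).mkQ (c * q) := hc q
    have hq' : (ker f).mkQ q = (t : A ⧸ ker f) := hq
    have : u = (ker f).mkQ (c * q) := by rw [← h2, hq', h1]
    rw [this]
    exact Submodule.mem_map_of_mem (Q.mul_mem_left c hqQ)
  have hQb : Qb = ⊤ := by
    apply top_unique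
    rw [← IsSemisimpleModule.sSup_simples_eq_top Aᵐᵒᵖ (A ⧸ ker f)]
    exact sSup_le fun U hU => key U hU
  have h1 : (ker f).mkQ 1 ∈ Qb := hQb ▸ Submodule.mem_top
  obtain ⟨q, hqQ, hq⟩ := Submodule.mem_map.mp h1
  have hsub : (1 : A) - q ∈ ker f := by
    rw [← Submodule.Quotient.eq]
    exact hq.symm
  have h1Q : (1 : A) ∈ Q := by
    have : (1 : A) - q ∈ Q := le_of_lt hlt ((hkerann _).mp hsub)
    simpa using Q.add_mem this hqQ
  exact (Ideal.eq_top_iff_one Q).mpr h1Q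

theorem part3_18 (R : Type u) [CommRing R] [Algebra R A] [Module.Finite R A] (S S' : Type u) [AddCommGroup S] [Module Aᵐᵒᵖ S] [AddCommGroup S']
    [Module Aᵐᵒᵖ S'] (hS : IsSimpleModule Aᵐᵒᵖ S) (hS' : IsSimpleModule Aᵐᵒᵖ S')
    (hann : {a : A | ∀ x : S, op a • x = 0} = {a : A | ∀ x : S', op a • x = 0}) :
    Nonempty (S ≃ₗ[Aᵐᵒᵖ] S') := by
  haveI := hS; haveI := hS'
  haveI := IsSimpleModule.nontrivial Aᵐᵒᵖ (M := S')
  obtain ⟨n, x, hx⟩ := exists_rgens18 (A := A) (R := R) S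
  set f := genMap18 (A := A) x with hf
  letI : IsSemisimpleModule Aᵐᵒᵖ S := isSemisimple_of_isSimple18
  letI : IsSemisimpleModule Aᵐᵒᵖ (Fin n → S) := isSemisimple_pi18 n
  letI : IsSemisimpleModule Aᵐᵒᵖ ↥(range f) := inferInstance
  letI : IsSemisimpleModule Aᵐᵒᵖ (A ⧸ ker f) := IsSemisimpleModule.congr f.quotKerEquivRange
  obtain ⟨y₀, hy₀⟩ := exists_ne (0 : S')
  let g : A →ₗ[Aᵐᵒᵖ] S' := cycMap18 y₀
  have hgs : Function.Surjective g := cycMap18_surjective hy₀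
  have hker : ker f ≤ ker g := by
    intro a haf
    have h1 : ∀ s : S, op a • s = 0 := (mem_ker_genMap18 hx a).mp haf
    have h2 : a ∈ {a : A | ∀ x : S', op a • x = 0} := hann ▸ h1
    exact mem_ker.mpr (h2 y₀)
  let gbar := (ker f).liftQ g hker
  have hgbar : Function.Surjective gbar := by
    intro s
    obtain ⟨a, rfl⟩ := hgs s
    exact ⟨(ker f).mkQ a, by rw [← LinearMap.comp_apply, Submodule.liftQ_mkQ]⟩
  obtain ⟨C, hC⟩ := exists_isCompl (ker gbar)
  let e1 : ((A ⧸ ker f) ⧸ ker gbar) ≃ₗ[Aᵐᵒᵖ] S' := gbar.quotKerEquivOfSurjective hgbar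
  let e2 := Submodule.quotientEquivOfIsCompl (ker gbar) C hC
  let eC : C ≃ₗ[Aᵐᵒᵖ] S' := e2.symm.trans e1
  haveI : IsSimpleModule Aᵐᵒᵖ C := IsSimpleModule.congr eC
  obtain ⟨eCS⟩ := simple_quot_sub_equiv18 f C
  exact ⟨eCS.symm.trans eC⟩

end P18

end MyProof18

/-- For a Noether `R`-algebra `A`, the assignment `P ↦ S_A(P)` is a
bijection from the maximal two-sided ideals of `A` to the isomorphism classes of
simple right `A`-modules, with inverse `S ↦ Ann_A(S)`: every maximal two-sided ideal
is the annihilator of a simple right module, the annihilator of any simple right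
module is a maximal two-sided ideal, and two simple right modules with the same
annihilator are isomorphic. -/
theorem simple_right_modules_biject_with_maximal_two_sided_ideals
    {R A : Type u} [CommRing R] [IsNoetherianRing R] [Ring A] [Algebra R A]
    [Module.Finite R A] :
    (∀ P : Ideal A, IsMaximalTwoSided P →
      ∃ S : ModuleOver Aᵐᵒᵖ, IsSimpleModule Aᵐᵒᵖ S.carrier ∧
        {a : A | ∀ x : S.carrier, op a • x = 0} = (P : Set A)) ∧
    (∀ (S : Type u) [AddCommGroup S] [Module Aᵐᵒᵖ S], IsSimpleModule Aᵐᵒᵖ S →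
      ∃ P : Ideal A, IsMaximalTwoSided P ∧
        {a : A | ∀ x : S, op a • x = 0} = (P : Set A)) ∧
    (∀ (S S' : Type u) [AddCommGroup S] [Module Aᵐᵒᵖ S] [AddCommGroup S']
      [Module Aᵐᵒᵖ S'],
      IsSimpleModule Aᵐᵒᵖ S → IsSimpleModule Aᵐᵒᵖ S' →
      {a : A | ∀ x : S, op a • x = 0} = {a : A | ∀ x : S', op a • x = 0} →
      Nonempty (S ≃ₗ[Aᵐᵒᵖ] S')) := by
  refine ⟨fun P hP => part1_18 P hP, fun S _ _ hS => ?_,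
    fun S S' _ _ _ _ hS hS' hann => part3_18 R S S' hS hS' hann⟩
  exact ⟨annIdeal18 S, part2_18 R S hS, rfl⟩
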